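/- Let Z be a stationary process on a finite alphabet 𝒵 and let Z' be a first-order Markov chain on 𝒵 with transition matrix P' and initial distribution equal to the marginal of Z_1, such that P'_{z→z'} > 0 whenever P(Z_1 = z, Z_2 = z') > 0. Then the Kullback–Leibler divergence rate D̄(Z‖Z') := lim_{n→∞} (1/n) Σ_{z_1^n} p_{Z_1^n}(z_1^n) log( p_{Z_1^n}(z_1^n) / p_{Z'_1^n}(z_1^n) ) exists and satisfies D̄(Z‖Z') ≥ H(Z_2|Z_1) − H̄(Z); moreover, the minimum over all such transition matrices P' is attained at P_{z→z'} = P(Z_2 = z' | Z_1 = z), and for this choice D̄(Z‖Z') = H(Z_2|Z_1) − H̄(Z). -/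

import Mathlib

open Filter Real

/-- Shannon entropy (base 2) of a finitely supported probability mass function. -/
noncomputable def ent {A : Type} [Fintype A] (q : A → ℝ) : ℝ :=
  - ∑ a, q a * Real.logb 2 (q a)

/-- Joint law of the first `n+1` samples of a Markov chain with initial distribution `μ`
and transition matrix `P`. -/
noncomputable def chainJoint {X : Type} (μ : X → ℝ) (P : X → X → ℝ) (n : ℕ)
    (x : Fin (n + 1) → X) : ℝ :=
  μ (x 0) * ∏ i : Fin n, P (x i.castSucc) (x i.succ)

/-- A stationary stochastic process on a finite alphabet `Z`, described by the consistent,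
shift-invariant family of joint probability mass functions of `(Z_1, …, Z_{n+1})`. -/
structure StationaryProcess (Z : Type) [Fintype Z] where
  p : (n : ℕ) → (Fin (n + 1) → Z) → ℝ
  nonneg : ∀ n z, 0 ≤ p n z
  sum_one : ∀ n, ∑ z, p n z = 1
  consistent : ∀ n (z : Fin (n + 1) → Z), p n z = ∑ z', p (n + 1) (Fin.snoc z z')
  shift : ∀ n (z : Fin (n + 1) → Z), p n z = ∑ z0, p (n + 1) (Fin.cons z0 z)

/-- A stationary process is a first-order Markov chain: for all `n > 1` and all trajectories,
`P(Z_n = z_n | Z_1^{n-1} = z_1^{n-1}) = P(Z_n = z_n | Z_{n-1} = z_{n-1})`, expressed in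
cross-multiplied form. -/
def IsMarkov {Z : Type} [Fintype Z] (S : StationaryProcess Z) : Prop :=
  ∀ n (z : Fin (n + 2) → Z),
    S.p (n + 1) z * S.p 0 (fun _ => z ⟨n, by omega⟩) =
      S.p n (fun i => z i.castSucc) *
        S.p 1 (fun i : Fin 2 => z ⟨n + i.val, by have := i.isLt; omega⟩)

section MyHelpers
variable {Z : Type} [Fintype Z]

set_option linter.unusedSectionVars false

lemma sum_pi_snoc {Z : Type} [Fintype Z] {m : ℕ} (g : (Fin (m+1) → Z) → ℝ) :
    ∑ x, g x = ∑ y : Fin m → Z, ∑ a : Z, g (Fin.snoc y a) := by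
  rw [← Equiv.sum_comp (Fin.snocEquiv fun _ => Z) g, Fintype.sum_prod_type, Finset.sum_comm]
  rfl

lemma sum_pi_cons {Z : Type} [Fintype Z] {m : ℕ} (g : (Fin (m+1) → Z) → ℝ) :
    ∑ x, g x = ∑ y : Fin m → Z, ∑ a : Z, g (Fin.cons a y) := by
  rw [← Equiv.sum_comp (Fin.consEquiv fun _ => Z) g, Fintype.sum_prod_type, Finset.sum_comm]
  rfl

lemma sum_pi_one {Z : Type} [Fintype Z] (g : (Fin 1 → Z) → ℝ) :
    ∑ x, g x = ∑ a : Z, g (fun _ => a) := by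
  rw [← Equiv.sum_comp (Equiv.funUnique (Fin 1) Z).symm g]
  rfl

lemma sum_pi_two {Z : Type} [Fintype Z] (g : (Fin 2 → Z) → ℝ) :
    ∑ x, g x = ∑ a : Z, ∑ b : Z, g ![a, b] := by
  rw [← Equiv.sum_comp (piFinTwoEquiv fun _ => Z).symm g, Fintype.sum_prod_type]
  apply Finset.sum_congr rfl; intro a _; apply Finset.sum_congr rfl; intro b _
  congr 1

variable {Z : Type} [Fintype Z]

lemma snoc_pair (a b : Z) : (Fin.snoc (fun _ => a) b : Fin 2 → Z) = ![a, b] := by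
  funext i
  fin_cases i
  · exact Fin.snoc_castSucc _ _ 0
  · exact Fin.snoc_last _ _

/-- first-coordinate marginal -/
lemma marg_zero (S : StationaryProcess Z) :
    ∀ (n : ℕ) (f : Z → ℝ),
      ∑ z : Fin (n+1) → Z, S.p n z * f (z 0) = ∑ a, S.p 0 (fun _ => a) * f a := by
  intro n
  induction n with
  | zero =>
    intro f
    rw [sum_pi_one (fun z => S.p 0 z * f (z 0))]
  | succ n ih =>
    intro f
    rw [sum_pi_snoc (fun z : Fin (n+2) → Z => S.p (n+1) z * f (z 0))]
    have h1 : ∀ (y : Fin (n+1) → Z) (a : Z),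
        S.p (n+1) (Fin.snoc y a) * f ((Fin.snoc y a : Fin (n+2) → Z) 0)
          = S.p (n+1) (Fin.snoc y a) * f (y 0) := by
      intro y a
      congr 2
    simp only [h1]
    have h2 : ∀ y : Fin (n+1) → Z,
        ∑ a, S.p (n+1) (Fin.snoc y a) * f (y 0) = S.p n y * f (y 0) := by
      intro y
      rw [← Finset.sum_mul, ← S.consistent]
    simp only [h2]
    exact ih f

/-- row marginal of the pair distribution -/
lemma row_marg (S : StationaryProcess Z) (a : Z) :
    ∑ b, S.p 1 ![a, b] = S.p 0 (fun _ => a) := by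
  rw [S.consistent 0 (fun _ => a)]
  apply Finset.sum_congr rfl; intro b _
  rw [snoc_pair]

/-- pair marginal -/
lemma pair_marg (S : StationaryProcess Z) :
    ∀ (n : ℕ) (i : Fin (n+1)) (g : Z → Z → ℝ),
      ∑ z : Fin (n+2) → Z, S.p (n+1) z * g (z i.castSucc) (z i.succ)
        = ∑ a, ∑ b, S.p 1 ![a, b] * g a b := by
  intro n
  induction n with
  | zero =>
    intro i g
    have hi : i = 0 := Fin.fin_one_eq_zero i
    subst hi
    rw [sum_pi_two (fun z => S.p 1 z * g (z (Fin.castSucc 0)) (z (Fin.succ 0)))]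
    apply Finset.sum_congr rfl; intro a _; apply Finset.sum_congr rfl; intro b _
    rfl
  | succ n ih =>
    intro i g
    by_cases hle : (i : ℕ) ≤ n
    · -- drop last coordinate via consistency
      set i' : Fin (n+1) := ⟨i, by omega⟩ with hi'
      have hc : (Fin.castSucc i : Fin (n+3)) = Fin.castSucc (Fin.castSucc i') := by
        apply Fin.ext; simp [hi']
      have hs : (Fin.succ i : Fin (n+3)) = Fin.castSucc (Fin.succ i') := by
        apply Fin.ext; simp [hi']
      rw [sum_pi_snoc (fun z => S.p (n+2) z * g (z i.castSucc) (z i.succ))]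
      have : ∀ (y : Fin (n+2) → Z),
          ∑ a, S.p (n+2) (Fin.snoc y a) * g ((Fin.snoc y a : Fin (n+3) → Z) i.castSucc)
            ((Fin.snoc y a : Fin (n+3) → Z) i.succ)
          = S.p (n+1) y * g (y i'.castSucc) (y i'.succ) := by
        intro y
        have e : ∀ a : Z, S.p (n+2) (Fin.snoc y a) * g ((Fin.snoc y a : Fin (n+3) → Z) i.castSucc)
            ((Fin.snoc y a : Fin (n+3) → Z) i.succ)
            = S.p (n+2) (Fin.snoc y a) * g (y i'.castSucc) (y i'.succ) := by
          intro a
          rw [hc, hs, Fin.snoc_castSucc, Fin.snoc_castSucc]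
        simp only [e]
        rw [← Finset.sum_mul, ← S.consistent]
      simp only [this]
      exact ih i' g
    · -- i = n+1 : drop first coordinate via shift
      have hval : (i : ℕ) = n + 1 := by omega
      set i' : Fin (n+1) := ⟨n, by omega⟩ with hi'
      have hc : (Fin.castSucc i : Fin (n+3)) = Fin.succ (Fin.castSucc i') := by
        apply Fin.ext; simp [hi', hval]
      have hs : (Fin.succ i : Fin (n+3)) = Fin.succ (Fin.succ i') := by
        apply Fin.ext; simp [hi', hval]
      rw [sum_pi_cons (fun z => S.p (n+2) z * g (z i.castSucc) (z i.succ))]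
      have : ∀ (y : Fin (n+2) → Z),
          ∑ a, S.p (n+2) (Fin.cons a y) * g ((Fin.cons a y : Fin (n+3) → Z) i.castSucc)
            ((Fin.cons a y : Fin (n+3) → Z) i.succ)
          = S.p (n+1) y * g (y i'.castSucc) (y i'.succ) := by
        intro y
        have e : ∀ a : Z, S.p (n+2) (Fin.cons a y) * g ((Fin.cons a y : Fin (n+3) → Z) i.castSucc)
            ((Fin.cons a y : Fin (n+3) → Z) i.succ)
            = S.p (n+2) (Fin.cons a y) * g (y i'.castSucc) (y i'.succ) := by
          intro a
          rw [hc, hs, Fin.cons_succ, Fin.cons_succ]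
        simp only [e]
        rw [← Finset.sum_mul, ← S.shift]
      simp only [this]
      exact ih i' g

/-- pair marginal, general index version -/
lemma pair_marg' (S : StationaryProcess Z) (n : ℕ) (i : Fin n) (g : Z → Z → ℝ) :
    ∑ z : Fin (n+1) → Z, S.p n z * g (z i.castSucc) (z i.succ)
      = ∑ a, ∑ b, S.p 1 ![a, b] * g a b := by
  cases n with
  | zero => exact i.elim0
  | succ m => exact pair_marg S m i g

lemma pair_pos (S : StationaryProcess Z) (m : ℕ) (i : Fin (m+1)) (z : Fin (m+2) → Z)
    (hz : 0 < S.p (m+1) z) : 0 < S.p 1 ![z i.castSucc, z i.succ] := by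
  classical
  have key := pair_marg S m i (fun a b =>
    (if a = z i.castSucc then (1:ℝ) else 0) * (if b = z i.succ then (1:ℝ) else 0))
  have hrhs : ∑ a, ∑ b, S.p 1 ![a, b] *
      ((if a = z i.castSucc then (1:ℝ) else 0) * (if b = z i.succ then (1:ℝ) else 0))
      = S.p 1 ![z i.castSucc, z i.succ] := by
    simp [mul_ite, mul_one, mul_zero, Finset.sum_ite_eq', ite_and]
  have hle : S.p (m+1) z ≤ ∑ z' : Fin (m+2) → Z, S.p (m+1) z' *
      ((if z' i.castSucc = z i.castSucc then (1:ℝ) else 0) *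
        (if z' i.succ = z i.succ then (1:ℝ) else 0)) := by
    have h := Finset.single_le_sum
      (f := fun z' : Fin (m+2) → Z => S.p (m+1) z' *
        ((if z' i.castSucc = z i.castSucc then (1:ℝ) else 0) *
          (if z' i.succ = z i.succ then (1:ℝ) else 0)))
      (fun w _ => by
        apply mul_nonneg (S.nonneg _ w)
        apply mul_nonneg <;> split_ifs <;> norm_num)
      (Finset.mem_univ z)
    simpa using h
  rw [key, hrhs] at hle
  linarith

lemma pair_pos' (S : StationaryProcess Z) (n : ℕ) (i : Fin n) (z : Fin (n+1) → Z)
    (hz : 0 < S.p n z) : 0 < S.p 1 ![z i.castSucc, z i.succ] := by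
  cases n with
  | zero => exact i.elim0
  | succ m => exact pair_pos S m i z hz

lemma marg_zero_pos (S : StationaryProcess Z) (n : ℕ) (z : Fin (n+1) → Z)
    (hz : 0 < S.p n z) : 0 < S.p 0 (fun _ => z 0) := by
  classical
  have key := marg_zero S n (fun a => if a = z 0 then (1:ℝ) else 0)
  have hrhs : ∑ a, S.p 0 (fun _ => a) * (if a = z 0 then (1:ℝ) else 0)
      = S.p 0 (fun _ => z 0) := by
    simp [mul_ite, mul_one, mul_zero, Finset.sum_ite_eq']
  have hle : S.p n z ≤ ∑ z' : Fin (n+1) → Z, S.p n z' *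
      (if z' 0 = z 0 then (1:ℝ) else 0) := by
    have h := Finset.single_le_sum
      (f := fun z' : Fin (n+1) → Z => S.p n z' * (if z' 0 = z 0 then (1:ℝ) else 0))
      (fun w _ => by
        apply mul_nonneg (S.nonneg _ w)
        split_ifs <;> norm_num)
      (Finset.mem_univ z)
    simpa using h
  rw [key, hrhs] at hle
  linarith

noncomputable def LQ (S : StationaryProcess Z) (Q : Z → Z → ℝ) : ℝ :=
  ∑ a, ∑ b, S.p 1 ![a, b] * Real.logb 2 (Q a b)

lemma ent_zero_eq (S : StationaryProcess Z) :
    ent (S.p 0) = -∑ a, S.p 0 (fun _ => a) * Real.logb 2 (S.p 0 (fun _ => a)) := by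
  unfold ent
  rw [sum_pi_one (fun z => S.p 0 z * Real.logb 2 (S.p 0 z))]

lemma ent_one_eq (S : StationaryProcess Z) :
    ent (S.p 1) = -∑ a, ∑ b, S.p 1 ![a, b] * Real.logb 2 (S.p 1 ![a, b]) := by
  unfold ent
  rw [sum_pi_two (fun z => S.p 1 z * Real.logb 2 (S.p 1 z))]

lemma kl_identity (S : StationaryProcess Z) (Q : Z → Z → ℝ)
    (hQ : ∀ a b, 0 < S.p 1 ![a, b] → 0 < Q a b) (n : ℕ) :
    ∑ z : Fin (n+1) → Z, S.p n z * Real.logb 2 (S.p n z /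
        chainJoint (fun a => S.p 0 (fun _ => a)) Q n z)
      = -ent (S.p n) + ent (S.p 0) - n * LQ S Q := by
  have step : ∀ z : Fin (n+1) → Z,
      S.p n z * Real.logb 2 (S.p n z / chainJoint (fun a => S.p 0 (fun _ => a)) Q n z)
        = S.p n z * Real.logb 2 (S.p n z)
          - S.p n z * Real.logb 2 (S.p 0 (fun _ => z 0))
          - ∑ i : Fin n, S.p n z * Real.logb 2 (Q (z i.castSucc) (z i.succ)) := by
    intro z
    rcases eq_or_lt_of_le (S.nonneg n z) with h | h
    · simp [← h]
    · have hμ : 0 < S.p 0 (fun _ => z 0) := marg_zero_pos S n z h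
      have hQpos : ∀ i : Fin n, 0 < Q (z i.castSucc) (z i.succ) :=
        fun i => hQ _ _ (pair_pos' S n i z h)
      have hprod : 0 < ∏ i : Fin n, Q (z i.castSucc) (z i.succ) :=
        Finset.prod_pos fun i _ => hQpos i
      have hchain : chainJoint (fun a => S.p 0 (fun _ => a)) Q n z ≠ 0 :=
        (mul_pos hμ hprod).ne'
      rw [Real.logb_div h.ne' hchain]
      simp only [chainJoint]
      rw [Real.logb_mul hμ.ne' hprod.ne']
      have hlp : Real.logb 2 (∏ i : Fin n, Q (z i.castSucc) (z i.succ))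
          = ∑ i : Fin n, Real.logb 2 (Q (z i.castSucc) (z i.succ)) := by
        simp only [Real.logb]
        rw [Real.log_prod fun i _ => (hQpos i).ne', Finset.sum_div]
      rw [hlp, mul_sub, mul_add, Finset.mul_sum]
      ring
  rw [Finset.sum_congr rfl fun z _ => step z, Finset.sum_sub_distrib, Finset.sum_sub_distrib]
  have e1 : ∑ z : Fin (n+1) → Z, S.p n z * Real.logb 2 (S.p n z) = -ent (S.p n) := by
    unfold ent; ring
  have e2 : ∑ z : Fin (n+1) → Z, S.p n z * Real.logb 2 (S.p 0 (fun _ => z 0))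
      = -ent (S.p 0) := by
    rw [marg_zero S n (fun a => Real.logb 2 (S.p 0 (fun _ => a))), ent_zero_eq]
    ring
  have e3 : ∑ z : Fin (n+1) → Z, ∑ i : Fin n,
      S.p n z * Real.logb 2 (Q (z i.castSucc) (z i.succ)) = n * LQ S Q := by
    rw [Finset.sum_comm]
    rw [Finset.sum_congr rfl fun i _ => pair_marg' S n i (fun a b => Real.logb 2 (Q a b))]
    rw [Finset.sum_const, Finset.card_fin]
    simp [nsmul_eq_mul, LQ]
  rw [e1, e2, e3]
  ring

lemma main_tendsto (S : StationaryProcess Z) (hbar : ℝ)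
    (hlim : Filter.Tendsto (fun n => ent (S.p (n + 1)) - ent (S.p n))
      Filter.atTop (nhds hbar))
    (Q : Z → Z → ℝ) (hQ : ∀ a b, 0 < S.p 1 ![a, b] → 0 < Q a b) :
    Filter.Tendsto (fun n : ℕ => (1 / ((n : ℝ) + 1)) * ∑ z : Fin (n + 1) → Z,
        S.p n z * Real.logb 2 (S.p n z /
          chainJoint (fun a => S.p 0 (fun _ => a)) Q n z))
      Filter.atTop (nhds (-hbar - LQ S Q)) := by
  have hces : Tendsto (fun n : ℕ => (n:ℝ)⁻¹ * (ent (S.p n) - ent (S.p 0))) atTop (nhds hbar) := by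
    have h := hlim.cesaro
    simpa [Finset.sum_range_sub (fun k => ent (S.p k))] using h
  have h2 : Tendsto (fun n : ℕ => (1 - 1/((n:ℝ)+1)) *
      ((n:ℝ)⁻¹ * (ent (S.p n) - ent (S.p 0)) + LQ S Q)) atTop
      (nhds (1 * (hbar + LQ S Q))) := by
    apply Tendsto.mul
    · simpa using (tendsto_const_nhds (x := (1:ℝ))).sub (tendsto_one_div_add_atTop_nhds_zero_nat :
        Tendsto (fun n : ℕ => 1 / ((n:ℝ) + 1)) atTop (nhds 0))
    · exact hces.add tendsto_const_nhds
  have h3 := h2.neg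
  rw [show -(1 * (hbar + LQ S Q)) = -hbar - LQ S Q by ring] at h3
  apply h3.congr'
  filter_upwards [Filter.eventually_ge_atTop 1] with n hn
  have hn0 : (0:ℝ) < (n:ℝ) := by exact_mod_cast hn
  rw [kl_identity S Q hQ n]
  field_simp
  ring

lemma mu_sum_one (S : StationaryProcess Z) : ∑ a, S.p 0 (fun _ => a) = 1 := by
  rw [← sum_pi_one (fun z => S.p 0 z)]
  exact S.sum_one 0

lemma row_pos (S : StationaryProcess Z) {a b : Z} (h : 0 < S.p 1 ![a, b]) :
    0 < S.p 0 (fun _ => a) := by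
  rw [← row_marg S a]
  calc 0 < S.p 1 ![a, b] := h
  _ ≤ ∑ b', S.p 1 ![a, b'] :=
      Finset.single_le_sum (fun c _ => S.nonneg 1 ![a, c]) (Finset.mem_univ b)

lemma LQ_le (S : StationaryProcess Z) (Q : Z → Z → ℝ)
    (hQ0 : ∀ z z', 0 ≤ Q z z') (hQ1 : ∀ z, ∑ z', Q z z' = 1)
    (hQpos : ∀ z z', 0 < S.p 1 ![z, z'] → 0 < Q z z') :
    LQ S Q ≤ ent (S.p 0) - ent (S.p 1) := by
  classical
  have hlog2 : (0:ℝ) < Real.log 2 := Real.log_pos (by norm_num)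
  set c : Z → Z → ℝ := fun a b => if S.p 1 ![a, b] = 0 then 0 else Q a b * S.p 0 (fun _ => a)
    with hc
  have term_le : ∀ a b,
      S.p 1 ![a, b] * Real.logb 2 (Q a b)
        + S.p 1 ![a, b] * Real.logb 2 (S.p 0 (fun _ => a))
        - S.p 1 ![a, b] * Real.logb 2 (S.p 1 ![a, b])
      ≤ (c a b - S.p 1 ![a, b]) / Real.log 2 := by
    intro a b
    rcases eq_or_lt_of_le (S.nonneg 1 ![a, b]) with h | h
    · simp [hc, ← h]
    · have hμ : 0 < S.p 0 (fun _ => a) := row_pos S h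
      have hq : 0 < Q a b := hQpos a b h
      have hx : 0 < Q a b * S.p 0 (fun _ => a) / S.p 1 ![a, b] := by positivity
      have hlog := Real.log_le_sub_one_of_pos hx
      rw [Real.log_div (by positivity) h.ne', Real.log_mul hq.ne' hμ.ne'] at hlog
      have hcc : c a b = Q a b * S.p 0 (fun _ => a) := by
        simp [hc, h.ne']
      rw [hcc]
      simp only [Real.logb]
      have h2 : S.p 1 ![a, b] * (Real.log (Q a b) + Real.log (S.p 0 fun _ => a)
            - Real.log (S.p 1 ![a, b]))
          ≤ Q a b * S.p 0 (fun _ => a) - S.p 1 ![a, b] := by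
        have h4 := mul_le_mul_of_nonneg_left hlog h.le
        have h5 : S.p 1 ![a, b] * (Q a b * S.p 0 (fun _ => a) / S.p 1 ![a, b] - 1)
            = Q a b * S.p 0 (fun _ => a) - S.p 1 ![a, b] := by
          field_simp
        linarith
      calc S.p 1 ![a, b] * (Real.log (Q a b) / Real.log 2)
            + S.p 1 ![a, b] * (Real.log (S.p 0 fun _ => a) / Real.log 2)
            - S.p 1 ![a, b] * (Real.log (S.p 1 ![a, b]) / Real.log 2)
          = S.p 1 ![a, b] * (Real.log (Q a b) + Real.log (S.p 0 fun _ => a)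
              - Real.log (S.p 1 ![a, b])) / Real.log 2 := by ring
        _ ≤ (Q a b * S.p 0 (fun _ => a) - S.p 1 ![a, b]) / Real.log 2 := by gcongr
  have hp_sum : ∑ a, ∑ b, S.p 1 ![a, b] = 1 := by
    rw [← sum_pi_two (fun z => S.p 1 z)]
    exact S.sum_one 1
  have hc_le : ∑ a, ∑ b, c a b ≤ 1 := by
    calc ∑ a, ∑ b, c a b ≤ ∑ a, ∑ b, Q a b * S.p 0 (fun _ => a) := by
          apply Finset.sum_le_sum; intro a _
          apply Finset.sum_le_sum; intro b _
          by_cases hab : S.p 1 ![a, b] = 0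
          · have : c a b = 0 := by simp [hc, hab]
            rw [this]
            exact mul_nonneg (hQ0 a b) (S.nonneg 0 _)
          · have : c a b = Q a b * S.p 0 (fun _ => a) := by simp [hc, hab]
            rw [this]
      _ = ∑ a, S.p 0 (fun _ => a) := by
          apply Finset.sum_congr rfl; intro a _
          rw [← Finset.sum_mul, hQ1 a, one_mul]
      _ = 1 := mu_sum_one S
  have hbound : ∑ a, ∑ b, ((c a b - S.p 1 ![a, b]) / Real.log 2) ≤ 0 := by
    have e : ∑ a, ∑ b, ((c a b - S.p 1 ![a, b]) / Real.log 2)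
        = ((∑ a, ∑ b, c a b) - (∑ a, ∑ b, S.p 1 ![a, b])) / Real.log 2 := by
      simp only [← Finset.sum_div, Finset.sum_sub_distrib]
    rw [e, hp_sum]
    apply div_nonpos_of_nonpos_of_nonneg _ hlog2.le
    linarith
  have hmu_rewrite : ∑ a, S.p 0 (fun _ => a) * Real.logb 2 (S.p 0 (fun _ => a))
      = ∑ a, ∑ b, S.p 1 ![a, b] * Real.logb 2 (S.p 0 (fun _ => a)) := by
    apply Finset.sum_congr rfl; intro a _
    rw [← Finset.sum_mul, row_marg]
  have expand : LQ S Q + (∑ a, ∑ b, S.p 1 ![a, b] * Real.logb 2 (S.p 0 (fun _ => a)))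
      - (∑ a, ∑ b, S.p 1 ![a, b] * Real.logb 2 (S.p 1 ![a, b]))
      = ∑ a, ∑ b, (S.p 1 ![a, b] * Real.logb 2 (Q a b)
          + S.p 1 ![a, b] * Real.logb 2 (S.p 0 (fun _ => a))
          - S.p 1 ![a, b] * Real.logb 2 (S.p 1 ![a, b])) := by
    simp [LQ, Finset.sum_sub_distrib, Finset.sum_add_distrib]
  have main : LQ S Q + (∑ a, ∑ b, S.p 1 ![a, b] * Real.logb 2 (S.p 0 (fun _ => a)))
      - (∑ a, ∑ b, S.p 1 ![a, b] * Real.logb 2 (S.p 1 ![a, b])) ≤ 0 := by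
    rw [expand]
    calc ∑ a, ∑ b, (S.p 1 ![a, b] * Real.logb 2 (Q a b)
          + S.p 1 ![a, b] * Real.logb 2 (S.p 0 (fun _ => a))
          - S.p 1 ![a, b] * Real.logb 2 (S.p 1 ![a, b]))
        ≤ ∑ a, ∑ b, ((c a b - S.p 1 ![a, b]) / Real.log 2) :=
          Finset.sum_le_sum fun a _ => Finset.sum_le_sum fun b _ => term_le a b
      _ ≤ 0 := hbound
  rw [ent_zero_eq, ent_one_eq, hmu_rewrite]
  linarith

open scoped Classical in
lemma LQ_star (S : StationaryProcess Z) :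
    LQ S (fun a b => if S.p 0 (fun _ => a) = 0 then (Fintype.card Z : ℝ)⁻¹
        else S.p 1 ![a, b] / S.p 0 (fun _ => a))
      = ent (S.p 0) - ent (S.p 1) := by
  have hmu_rewrite : ∑ a, S.p 0 (fun _ => a) * Real.logb 2 (S.p 0 (fun _ => a))
      = ∑ a, ∑ b, S.p 1 ![a, b] * Real.logb 2 (S.p 0 (fun _ => a)) := by
    apply Finset.sum_congr rfl; intro a _
    rw [← Finset.sum_mul, row_marg]
  have term : ∀ a b, S.p 1 ![a, b] * Real.logb 2 (if S.p 0 (fun _ => a) = 0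
        then (Fintype.card Z : ℝ)⁻¹ else S.p 1 ![a, b] / S.p 0 (fun _ => a))
      = S.p 1 ![a, b] * Real.logb 2 (S.p 1 ![a, b])
        - S.p 1 ![a, b] * Real.logb 2 (S.p 0 (fun _ => a)) := by
    intro a b
    rcases eq_or_lt_of_le (S.nonneg 1 ![a, b]) with h | h
    · simp [← h]
    · have hμ : 0 < S.p 0 (fun _ => a) := row_pos S h
      rw [if_neg hμ.ne', Real.logb_div h.ne' hμ.ne']
      ring
  unfold LQ
  rw [Finset.sum_congr rfl fun a _ => Finset.sum_congr rfl fun b _ => term a b]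
  rw [ent_zero_eq, ent_one_eq, hmu_rewrite]
  simp only [Finset.sum_sub_distrib]
  ring

open scoped Classical in
lemma Qstar_pos {Z : Type} [Fintype Z] (S : StationaryProcess Z) :
    ∀ a b, 0 < S.p 1 ![a, b] →
      0 < (if S.p 0 (fun _ => a) = 0 then (Fintype.card Z : ℝ)⁻¹
        else S.p 1 ![a, b] / S.p 0 (fun _ => a)) := by
  intro a b hab
  have hμ : 0 < S.p 0 (fun _ => a) := row_pos S hab
  rw [if_neg hμ.ne']
  exact div_pos hab hμ


end MyHelpers

open scoped Classical in
/-- Let `Z` be a stationary process on a finite alphabet and `Z'` a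
first-order Markov chain on the same alphabet with transition matrix `Q` and initial
distribution equal to the marginal of `Z_1`, where `Q z z' > 0` whenever
`P(Z_1 = z, Z_2 = z') > 0`.  Then the Kullback–Leibler divergence rate
`D̄(Z‖Z') = lim_n (1/n) ∑ p(z_1^n) log₂ (p(z_1^n)/p'(z_1^n))` exists and satisfies
`D̄(Z‖Z') ≥ H(Z_2|Z_1) − H̄(Z)`; moreover the minimum over all such transition matrices is
attained at `Q* z z' = P(Z_2 = z' | Z_1 = z)`, for which the divergence rate equals
`H(Z_2|Z_1) − H̄(Z)`. -/
theorem kldr_to_markov_exists_ge_and_min_attained {Z : Type} [Fintype Z] [Nonempty Z]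
    (S : StationaryProcess Z) (hbar : ℝ)
    (hlim : Filter.Tendsto (fun n => ent (S.p (n + 1)) - ent (S.p n))
      Filter.atTop (nhds hbar)) :
    (∀ Q : Z → Z → ℝ, (∀ z z', 0 ≤ Q z z') → (∀ z, ∑ z', Q z z' = 1) →
      (∀ z z', 0 < S.p 1 ![z, z'] → 0 < Q z z') →
      ∃ D : ℝ,
        Filter.Tendsto (fun n : ℕ => (1 / ((n : ℝ) + 1)) * ∑ z : Fin (n + 1) → Z,
            S.p n z * Real.logb 2 (S.p n z /
              chainJoint (fun a => S.p 0 (fun _ => a)) Q n z))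
          Filter.atTop (nhds D) ∧
        (ent (S.p 1) - ent (S.p 0)) - hbar ≤ D) ∧
    Filter.Tendsto (fun n : ℕ => (1 / ((n : ℝ) + 1)) * ∑ z : Fin (n + 1) → Z,
        S.p n z * Real.logb 2 (S.p n z /
          chainJoint (fun a => S.p 0 (fun _ => a))
            (fun a b => if S.p 0 (fun _ => a) = 0 then (Fintype.card Z : ℝ)⁻¹
              else S.p 1 ![a, b] / S.p 0 (fun _ => a)) n z))
      Filter.atTop (nhds ((ent (S.p 1) - ent (S.p 0)) - hbar)) := by
  constructor
  · intro Q hQ0 hQ1 hQpos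
    refine ⟨-hbar - LQ S Q, main_tendsto S hbar hlim Q hQpos, ?_⟩
    have hle := LQ_le S Q hQ0 hQ1 hQpos
    linarith
  · have h := main_tendsto S hbar hlim
      (fun a b => if S.p 0 (fun _ => a) = 0 then (Fintype.card Z : ℝ)⁻¹
        else S.p 1 ![a, b] / S.p 0 (fun _ => a)) (Qstar_pos S)
    rw [LQ_star] at h
    rw [show (ent (S.p 1) - ent (S.p 0)) - hbar
        = -hbar - (ent (S.p 0) - ent (S.p 1)) by ring]
    exact h
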